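/- Let G be a groupoid. The nerve of G, a functor from the opposite of the simplex category to types, is naturally isomorphic to the composite of (the opposite of) the forgetful functor from the simplex category to the category of (nonempty finite) types, sending [n] to Fin(n+1) and a monotone map to its underlying function, with the functor sending a type S to the set of functors from the codiscrete groupoid on S to G (and a function φ : S → S' to precomposition with the induced functor of codiscrete groupoids). In particular, the nerve of a groupoid extends from the simplex category to the category of all maps between nonempty finite cardinals. -/

import Mathlib

open CategoryTheory

universe u v

/-- The contravariant functor sending a type `S` to the type of functors from the
codiscrete groupoid on `S` to `G`, and a function to precomposition with the induced
functor of codiscrete groupoids. -/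
def codiscreteFunctorsTo (G : Type u) [Groupoid.{v} G] :
    (Type 0)ᵒᵖ ⥤ Type (max u v) where
  obj S := Codiscrete S.unop ⥤ G
  map φ := TypeCat.ofHom fun F => Codiscrete.functor (fun x : Codiscrete _ => φ.unop x.as) ⋙ F

namespace NerveCodiscreteAux

variable {G : Type u} [Groupoid.{v} G]

/-- Key lemma: `inv (F.map a) ≫ F.map b` doesn't depend on the basepoint. -/
lemma key {n : ℕ} (F : Fin (n + 1) ⥤ G) {p q x y : Fin (n + 1)}
    (a : p ⟶ x) (b : p ⟶ y) (a' : q ⟶ x) (b' : q ⟶ y) (h : q ≤ p) :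
    inv (F.map a) ≫ F.map b = inv (F.map a') ≫ F.map b' := by
  have ha : a' = homOfLE h ≫ a := Subsingleton.elim _ _
  have hb : b' = homOfLE h ≫ b := Subsingleton.elim _ _
  rw [ha, hb, F.map_comp, F.map_comp, IsIso.inv_comp]
  simp

/-- Extend a functor out of the linearly ordered `Fin (n+1)` to the codiscrete
category on `Fin (n+1)`. -/
@[simps]
noncomputable def ext {n : ℕ} (F : Fin (n + 1) ⥤ G) : Codiscrete (Fin (n + 1)) ⥤ G where
  obj x := F.obj x.as
  map {x y} _ := inv (F.map (homOfLE (Fin.zero_le x.as))) ≫ F.map (homOfLE (Fin.zero_le y.as))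
  map_id x := by simp
  map_comp _ _ := by simp

lemma ext_map_homOfLE {n : ℕ} (F : Fin (n + 1) ⥤ G) {x y : Fin (n + 1)}
    (f : x ⟶ y) (u : Codiscrete.mk x ⟶ Codiscrete.mk y) :
    (ext F).map u = F.map f := by
  dsimp [ext]
  rw [IsIso.inv_comp_eq, ← F.map_comp]
  exact congrArg F.map (Subsingleton.elim _ _)

/-- The restriction functor. -/
def res {n : ℕ} (K : Codiscrete (Fin (n + 1)) ⥤ G) : Fin (n + 1) ⥤ G :=
  Codiscrete.functor (id : Fin (n + 1) → Fin (n + 1)) ⋙ K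

lemma res_ext {n : ℕ} (F : Fin (n + 1) ⥤ G) : res (ext F) = F := by
  exact CategoryTheory.Functor.ext (fun x => rfl) (fun x y f => by
    erw [eqToHom_refl, eqToHom_refl, Category.comp_id, Category.id_comp]
    exact ext_map_homOfLE F f ⟨⟩)

lemma ext_res {n : ℕ} (K : Codiscrete (Fin (n + 1)) ⥤ G) : ext (res K) = K := by
  exact CategoryTheory.Functor.ext (fun x => rfl) (fun x y f => by
    erw [eqToHom_refl, eqToHom_refl, Category.comp_id, Category.id_comp]
    dsimp [ext, res, Codiscrete.functor]
    rw [IsIso.inv_comp_eq, ← K.map_comp]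
    rfl)

/-- The equivalence between `Fin (n+1) ⥤ G` and `Codiscrete (Fin (n+1)) ⥤ G`. -/
noncomputable def extEquiv (n : ℕ) : (Fin (n + 1) ⥤ G) ≃ (Codiscrete (Fin (n + 1)) ⥤ G) where
  toFun := ext
  invFun := res
  left_inv := res_ext
  right_inv := ext_res

end NerveCodiscreteAux

open NerveCodiscreteAux in
/-- The nerve of a groupoid `G` is naturally isomorphic to the composite
of (the opposite of) the forgetful functor `SimplexCategory ⥤ Type` (sending `[n]` to
`Fin (n+1)`) with the functor `S ↦ (Codiscrete S ⥤ G)`; in particular the nerve of a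
groupoid extends from the simplex category to the category of all maps between nonempty
finite cardinals. -/
theorem nerve_iso_codiscrete_functors
    {G : Type u} [Groupoid.{v} G] :
    Nonempty (nerve G ≅ (forget SimplexCategory).op ⋙ codiscreteFunctorsTo G) := by
  refine ⟨NatIso.ofComponents (fun Δ => Equiv.toIso (extEquiv (G := G) Δ.unop.len)) ?_⟩
  intro Δ Δ' φ
  ext F
  show ext ((nerve G).map φ F) = Codiscrete.functor (fun x => φ.unop.toOrderHom x.as) ⋙ ext F
  exact CategoryTheory.Functor.ext (fun x => rfl) (fun x y f => by
    erw [eqToHom_refl, eqToHom_refl, Category.comp_id, Category.id_comp]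
    dsimp [ext, Codiscrete.functor, nerve]
    exact key F _ _ _ _ (Fin.zero_le _))
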